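/- Let g = [[α,X,Y],[E,A,B],[F,C,D]] be a (2l+1)×(2l+1) matrix over 𝔽_q (blocks of sizes 1, l, l) satisfying ᵀg·β·g = β with β = [[2,0,0],[0,0,I_l],[0,I_l,0]]. If C is the diagonal matrix whose first m diagonal entries equal 1 and whose remaining entries equal 0 (0 < m < l), and the first m entries of the row vector X are 0, then writing A = [[A₁₁,A₁₂],[A₂₁,A₂₂]] with respect to the partition (m, l−m), one has A₁₂ = 0 and A₁₁ is skew-symmetric. -/

import Mathlib

open Matrix

/-- for `g = [[α,X,Y],[E,A,B],[F,C,D]] ∈ O(2l+1,q)` with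
`C = diag(1,…,1,0,…,0)` (`m` ones, `0 < m < l`) and the first `m` entries of
`X` zero, the blocks of `A` (partition `(m, l-m)`) satisfy `A₁₂ = 0` and
`A₁₁` skew-symmetric. -/
theorem stmt_12 (K : Type*) [Field K] [Fintype K] (hchar : ringChar K ≠ 2)
    (l m : ℕ) (hl : 2 ≤ l) (hm : 0 < m) (hml : m < l) (α : K)
    (X Y : Matrix (Fin 1) (Fin m ⊕ Fin (l - m)) K)
    (E Fm : Matrix (Fin m ⊕ Fin (l - m)) (Fin 1) K)
    (A11 : Matrix (Fin m) (Fin m) K) (A12 : Matrix (Fin m) (Fin (l - m)) K)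
    (A21 : Matrix (Fin (l - m)) (Fin m) K) (A22 : Matrix (Fin (l - m)) (Fin (l - m)) K)
    (A B C D : Matrix (Fin m ⊕ Fin (l - m)) (Fin m ⊕ Fin (l - m)) K)
    (hA : A = fromBlocks A11 A12 A21 A22)
    (hC : C = fromBlocks 1 0 0 0)
    (hX : ∀ (r : Fin 1) (j : Fin m), X r (Sum.inl j) = 0)
    (β g : Matrix (Fin 1 ⊕ ((Fin m ⊕ Fin (l - m)) ⊕ (Fin m ⊕ Fin (l - m))))
      (Fin 1 ⊕ ((Fin m ⊕ Fin (l - m)) ⊕ (Fin m ⊕ Fin (l - m)))) K)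
    (hβ : β = fromBlocks (Matrix.diagonal fun _ => (2 : K)) 0 0 (fromBlocks 0 1 1 0))
    (hg : g = fromBlocks (Matrix.diagonal fun _ => α) (fromCols X Y)
      (fromRows E Fm) (fromBlocks A B C D))
    (horth : gᵀ * β * g = β) :
    A12 = 0 ∧ A11ᵀ = -A11 := by
  subst hg hβ hA hC
  have key : ∀ p q : Fin m ⊕ Fin (l-m), _ := fun p q =>
    congrFun (congrFun horth (Sum.inr (Sum.inl p))) (Sum.inr (Sum.inl q))
  simp only [Matrix.mul_apply, Fintype.sum_sum_type, transpose_apply,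
    fromBlocks_apply₁₁, fromBlocks_apply₁₂, fromBlocks_apply₂₁, fromBlocks_apply₂₂,
    fromCols_apply_inl, fromCols_apply_inr, fromRows_apply_inl, fromRows_apply_inr,
    Matrix.zero_apply, Matrix.one_apply, Sum.inl.injEq, Sum.inr.injEq, reduceCtorEq,
    if_false, mul_ite, ite_mul, one_mul, mul_one, mul_zero, zero_mul,
    Finset.sum_ite_eq, Finset.sum_ite_eq', Finset.mem_univ, if_true,
    Finset.sum_const_zero, add_zero, zero_add, Finset.univ_unique, Finset.sum_singleton] at key
  have h12 : ∀ (pm : Fin m) (qr : Fin (l-m)), _ := fun pm qr => key (Sum.inl pm) (Sum.inr qr)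
  have h11 : ∀ (pm qm : Fin m), _ := fun pm qm => key (Sum.inl pm) (Sum.inl qm)
  simp only [fromBlocks_apply₁₁, fromBlocks_apply₁₂, fromBlocks_apply₂₁, fromBlocks_apply₂₂,
    Matrix.zero_apply, Matrix.one_apply, hX, mul_ite, ite_mul, one_mul, mul_one,
    mul_zero, zero_mul, Finset.sum_ite_eq, Finset.sum_ite_eq', Finset.mem_univ, if_true,
    Finset.sum_const_zero, add_zero, zero_add] at h12 h11
  refine ⟨?_, ?_⟩
  · ext pm qr
    exact h12 pm qr
  · ext pm qm
    simp only [transpose_apply, Matrix.neg_apply]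
    have := h11 qm pm
    linear_combination this
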